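/- Let H be a real Hilbert space and C a nonempty closed convex subset of H. Let T_1,…,T_N : C → C be asymptotically quasi-nonexpansive mappings with a common sequence {k_n} ⊂ [1,∞), k_n → 1, each uniformly L-Lipschitz, and suppose F = ⋂_{i=1}^N F(T_i) is nonempty and bounded, say F ⊆ {u ∈ C : ‖u‖ ≤ ω} for some ω > 0. For n ≥ 1 write n = (p_n − 1)N + j_n with j_n ∈ {1,…,N} (i.e. j_n = ((n−1) mod N) + 1 and p_n = ⌊(n−1)/N⌋ + 1). Let {α_n} ⊂ [0,1] with α_n → 0, and set ε_n = (k_{p_n} − 1)(ω + ‖x_n‖)². Let {x_n} be generated by: x_1 ∈ C, C_1 = Q_1 = C; y_n = α_n x_1 + (1 − α_n) T_{j_n}^{p_n} x_n; C_n = {v ∈ C : ‖v − y_n‖² ≤ α_n‖v − x_1‖² + (1 − α_n)‖v − x_n‖² + ε_n}; Q_n = {v ∈ Q_{n−1} : ⟨x_1 − x_n, x_n − v⟩ ≥ 0} for n ≥ 2; and x_{n+1} is the metric projection of x_1 onto C_n ∩ Q_n. Then {x_n} converges strongly to the metric projection of x_1 onto F. -/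

import Mathlib

open Filter Topology

open RealInnerProductSpace in
lemma aux_norm_combo_le {H : Type*} [NormedAddCommGroup H] [InnerProductSpace ℝ H]
    (a : ℝ) (ha : 0 ≤ a) (ha1 : a ≤ 1) (v w : H) :
    ‖a • v + (1 - a) • w‖ ^ 2 ≤ a * ‖v‖ ^ 2 + (1 - a) * ‖w‖ ^ 2 := by
  have h1 : ⟪v, w⟫ ≤ ‖v‖ * ‖w‖ := real_inner_le_norm v w
  have h2 : ‖a • v + (1 - a) • w‖ ^ 2
      = a ^ 2 * ‖v‖ ^ 2 + 2 * (a * (1 - a)) * ⟪v, w⟫ + (1 - a) ^ 2 * ‖w‖ ^ 2 := by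
    rw [norm_add_sq_real, norm_smul, norm_smul, real_inner_smul_left, real_inner_smul_right,
      Real.norm_eq_abs, Real.norm_eq_abs, abs_of_nonneg ha, abs_of_nonneg (by linarith)]
    ring
  have h3 : 0 ≤ a * (1 - a) := mul_nonneg ha (by linarith)
  nlinarith [sq_nonneg (‖v‖ - ‖w‖), mul_nonneg h3 (sq_nonneg (‖v‖ - ‖w‖))]

open RealInnerProductSpace in
lemma aux_affine {H : Type*} [NormedAddCommGroup H] [InnerProductSpace ℝ H]
    (yy x1 xn : H) (a : ℝ) (v : H) :
    ‖v - yy‖ ^ 2 - a * ‖v - x1‖ ^ 2 - (1 - a) * ‖v - xn‖ ^ 2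
      = 2 * ⟪v, a • x1 + (1 - a) • xn - yy⟫
        + (‖yy‖ ^ 2 - a * ‖x1‖ ^ 2 - (1 - a) * ‖xn‖ ^ 2) := by
  rw [norm_sub_sq_real, norm_sub_sq_real, norm_sub_sq_real, inner_sub_right, inner_add_right,
    real_inner_smul_right, real_inner_smul_right]
  ring

open RealInnerProductSpace in
lemma aux_CS_convex {H : Type*} [NormedAddCommGroup H] [InnerProductSpace ℝ H]
    {C : Set H} (hC : Convex ℝ C) (yy x1 xn : H) (a ε : ℝ) :
    Convex ℝ {v ∈ C | ‖v - yy‖ ^ 2 ≤ a * ‖v - x1‖ ^ 2 + (1 - a) * ‖v - xn‖ ^ 2 + ε} := by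
  intro v1 hv1 v2 hv2 c d hc hd hcd
  refine ⟨hC hv1.1 hv2.1 hc hd hcd, ?_⟩
  have e3 := aux_affine yy x1 xn a (c • v1 + d • v2)
  have hin : ⟪c • v1 + d • v2, a • x1 + (1 - a) • xn - yy⟫
      = c * ⟪v1, a • x1 + (1 - a) • xn - yy⟫ + d * ⟪v2, a • x1 + (1 - a) • xn - yy⟫ := by
    rw [inner_add_left, real_inner_smul_left, real_inner_smul_left]
  have b1 : 2 * ⟪v1, a • x1 + (1 - a) • xn - yy⟫
      + (‖yy‖ ^ 2 - a * ‖x1‖ ^ 2 - (1 - a) * ‖xn‖ ^ 2) ≤ ε := by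
    have h := hv1.2; have e1 := aux_affine yy x1 xn a v1; linarith
  have b2 : 2 * ⟪v2, a • x1 + (1 - a) • xn - yy⟫
      + (‖yy‖ ^ 2 - a * ‖x1‖ ^ 2 - (1 - a) * ‖xn‖ ^ 2) ≤ ε := by
    have h := hv2.2; have e2 := aux_affine yy x1 xn a v2; linarith
  have hd' : d = 1 - c := by linarith
  subst hd'
  nlinarith [mul_le_mul_of_nonneg_left b1 hc, mul_le_mul_of_nonneg_left b2 hd]

open RealInnerProductSpace in
lemma aux_QS_convex {H : Type*} [NormedAddCommGroup H] [InnerProductSpace ℝ H]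
    {S : Set H} (hS : Convex ℝ S) (a b : H) :
    Convex ℝ {v ∈ S | 0 ≤ ⟪a, b - v⟫} := by
  intro v1 hv1 v2 hv2 c d hc hd hcd
  refine ⟨hS hv1.1 hv2.1 hc hd hcd, ?_⟩
  have key : ⟪a, b - (c • v1 + d • v2)⟫ = c * ⟪a, b - v1⟫ + d * ⟪a, b - v2⟫ := by
    rw [inner_sub_right, inner_sub_right, inner_sub_right, inner_add_right,
      real_inner_smul_right, real_inner_smul_right]
    linear_combination (-⟪a, b⟫) * hcd
  rw [key]
  exact add_nonneg (mul_nonneg hc hv1.2) (mul_nonneg hd hv2.2)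

lemma aux_tendsto_of_sq {u : ℕ → ℝ} (hu : ∀ n, 0 ≤ u n)
    (h : Tendsto (fun n => u n ^ 2) atTop (𝓝 0)) : Tendsto u atTop (𝓝 0) := by
  have h2 := (Real.continuous_sqrt.tendsto 0).comp h
  have h3 : (Real.sqrt ∘ fun n => u n ^ 2) = u := funext fun n => by
    simp [Function.comp, Real.sqrt_sq (hu n)]
  rw [h3] at h2
  simpa using h2

set_option maxHeartbeats 1000000 in
/-- Sequential hybrid method for a finite family of asymptotically quasi-nonexpansive
mappings in a real Hilbert space (Theorem 3.11, Hilbert-space form). For `n ≥ 1` we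
write `n = (pₙ - 1) N + jₙ` with `jₙ = ((n-1) % N) + 1` and `pₙ = (n-1)/N + 1`; the
mapping `T_{jₙ}` is represented by `T ⟨(n-1) % N, _⟩` and the power `pₙ` by
`(n-1)/N + 1`. -/
theorem stmt_6
    {H : Type*} [NormedAddCommGroup H] [InnerProductSpace ℝ H] [CompleteSpace H]
    (C : Set H) (hCne : C.Nonempty) (hCcl : IsClosed C) (hCcv : Convex ℝ C)
    (N : ℕ) (hN : 0 < N) (T : Fin N → H → H) (hTmaps : ∀ i, Set.MapsTo (T i) C C)
    (k : ℕ → ℝ) (hk : ∀ n, 1 ≤ k n) (hklim : Tendsto k atTop (𝓝 1))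
    (hAQN : ∀ i, ∀ n, 1 ≤ n → ∀ p ∈ C, T i p = p →
      ∀ x ∈ C, ‖p - (T i)^[n] x‖ ^ 2 ≤ k n * ‖p - x‖ ^ 2)
    (L : ℝ)
    (hLip : ∀ i, ∀ n, 1 ≤ n → ∀ x ∈ C, ∀ y ∈ C,
      ‖(T i)^[n] x - (T i)^[n] y‖ ≤ L * ‖x - y‖)
    (F : Set H) (hF : F = ⋂ i, {x ∈ C | T i x = x}) (hFne : F.Nonempty)
    (ω : ℝ) (hω : 0 < ω) (hFbdd : ∀ u ∈ F, ‖u‖ ≤ ω)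
    (α : ℕ → ℝ) (hα : ∀ n, α n ∈ Set.Icc (0 : ℝ) 1) (hαlim : Tendsto α atTop (𝓝 0))
    (x : ℕ → H) (y : ℕ → H) (CS QS : ℕ → Set H)
    (hx1 : x 1 ∈ C) (hQS1 : QS 1 = C)
    (hy : ∀ n, 1 ≤ n →
      y n = α n • x 1 +
        (1 - α n) • (T ⟨(n - 1) % N, Nat.mod_lt _ hN⟩)^[(n - 1) / N + 1] (x n))
    (hCS : ∀ n, 1 ≤ n → CS n =
      {v ∈ C | ‖v - y n‖ ^ 2 ≤ α n * ‖v - x 1‖ ^ 2 + (1 - α n) * ‖v - x n‖ ^ 2 +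
        (k ((n - 1) / N + 1) - 1) * (ω + ‖x n‖) ^ 2})
    (hQS : ∀ n, 1 ≤ n → QS (n + 1) =
      {v ∈ QS n | 0 ≤ (inner ℝ (x 1 - x (n + 1)) (x (n + 1) - v) : ℝ)})
    (hproj : ∀ n, 1 ≤ n → x (n + 1) ∈ CS n ∩ QS n ∧
      ∀ v ∈ CS n ∩ QS n, ‖x (n + 1) - x 1‖ ≤ ‖v - x 1‖) :
    ∃ z ∈ F, (∀ v ∈ F, ‖z - x 1‖ ≤ ‖v - x 1‖) ∧ Tendsto x atTop (𝓝 z) := by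
  classical
  -- index functions
  set j : ℕ → Fin N := fun n => ⟨(n - 1) % N, Nat.mod_lt _ hN⟩ with hjdef
  set p : ℕ → ℕ := fun n => (n - 1) / N + 1 with hpdef
  have hy' : ∀ n, 1 ≤ n → y n = α n • x 1 + (1 - α n) • (T (j n))^[p n] (x n) := hy
  have hCS' : ∀ n, 1 ≤ n → CS n =
      {v ∈ C | ‖v - y n‖ ^ 2 ≤ α n * ‖v - x 1‖ ^ 2 + (1 - α n) * ‖v - x n‖ ^ 2 +
        (k (p n) - 1) * (ω + ‖x n‖) ^ 2} := hCS
  have hp1 : ∀ n, 1 ≤ p n := fun n => Nat.le_add_left 1 _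
  -- L' : nonnegative Lipschitz constant
  set L' : ℝ := max L 0 with hL'def
  have hL'0 : 0 ≤ L' := le_max_right _ _
  have hLip' : ∀ i, ∀ n, 1 ≤ n → ∀ a ∈ C, ∀ b ∈ C,
      ‖(T i)^[n] a - (T i)^[n] b‖ ≤ L' * ‖a - b‖ := by
    intro i n hn a ha b hb
    exact (hLip i n hn a ha b hb).trans
      (mul_le_mul_of_nonneg_right (le_max_left _ _) (norm_nonneg _))
  -- x n ∈ C
  have hxC : ∀ n, 1 ≤ n → x n ∈ C := by
    intro n hn
    match n, hn with
    | 1, _ => exact hx1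
    | (m + 2), _ =>
      have h := (hproj (m + 1) (by omega)).1.1
      rw [hCS' (m + 1) (by omega)] at h
      exact h.1
  -- F basic facts
  have hFC : ∀ u ∈ F, u ∈ C := by
    intro u hu; rw [hF] at hu
    exact (Set.mem_iInter.1 hu ⟨0, hN⟩).1
  have hFfix : ∀ u ∈ F, ∀ i, T i u = u := by
    intro u hu i; rw [hF] at hu; exact (Set.mem_iInter.1 hu i).2
  -- F ⊆ CS n
  have hFCS : ∀ n, 1 ≤ n → ∀ u ∈ F, u ∈ CS n := by
    intro n hn u hu
    rw [hCS' n hn]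
    have huC := hFC u hu
    refine ⟨huC, ?_⟩
    have hα0 := (hα n).1
    have hα1 := (hα n).2
    have hk1 := hk (p n)
    have hAQ := hAQN (j n) (p n) (hp1 n) u huC (hFfix u hu (j n)) (x n) (hxC n hn)
    have hxb : ‖u - x n‖ ≤ ω + ‖x n‖ :=
      le_trans (norm_sub_le _ _) (by linarith [hFbdd u hu])
    have hxb2 : ‖u - x n‖ ^ 2 ≤ (ω + ‖x n‖) ^ 2 :=
      pow_le_pow_left₀ (norm_nonneg _) hxb 2
    have hcombo : ‖u - y n‖ ^ 2 ≤
        α n * ‖u - x 1‖ ^ 2 + (1 - α n) * ‖u - (T (j n))^[p n] (x n)‖ ^ 2 := by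
      have hrw : u - y n = α n • (u - x 1) + (1 - α n) • (u - (T (j n))^[p n] (x n)) := by
        rw [hy' n hn]; module
      rw [hrw]
      exact aux_norm_combo_le (α n) hα0 hα1 _ _
    nlinarith [mul_le_mul_of_nonneg_left hAQ (by linarith : (0:ℝ) ≤ 1 - α n),
      mul_le_mul_of_nonneg_left hxb2 (by linarith : (0:ℝ) ≤ k (p n) - 1),
      mul_nonneg (mul_nonneg hα0 (by linarith : (0:ℝ) ≤ k (p n) - 1)) (sq_nonneg ‖u - x n‖)]
  -- CS n convex
  have hCSconv : ∀ n, 1 ≤ n → Convex ℝ (CS n) := by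
    intro n hn
    rw [hCS' n hn]
    exact aux_CS_convex hCcv (y n) (x 1) (x n) (α n) _
  -- QS n convex and contains F
  have hQSmain : ∀ n, 1 ≤ n → Convex ℝ (QS n) ∧ ∀ u ∈ F, u ∈ QS n := by
    intro n hn
    induction n with
    | zero => omega
    | succ m ih =>
      by_cases hm : m = 0
      · subst hm
        rw [hQS1]
        exact ⟨hCcv, fun u hu => hFC u hu⟩
      · have hm1 : 1 ≤ m := by omega
        obtain ⟨ihc, ihF⟩ := ih hm1
        rw [hQS m hm1]
        constructor
        · exact aux_QS_convex ihc (x 1 - x (m + 1)) (x (m + 1))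
        · intro u hu
          refine ⟨ihF u hu, ?_⟩
          have hK : Convex ℝ (CS m ∩ QS m) := (hCSconv m hm1).inter ihc
          have hx' := (hproj m hm1).1
          have hmin := (hproj m hm1).2
          haveI : Nonempty ↑(CS m ∩ QS m) := ⟨⟨x (m + 1), hx'⟩⟩
          have hiInf : ‖x 1 - x (m + 1)‖ = ⨅ w : (CS m ∩ QS m : Set H), ‖x 1 - w‖ := by
            apply le_antisymm
            · refine le_ciInf fun w => ?_
              have h := hmin w w.2
              rw [norm_sub_rev (x (m + 1)), norm_sub_rev (w : H)] at h
              exact h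
            · have hbdd : BddBelow (Set.range fun w : (CS m ∩ QS m : Set H) => ‖x 1 - (w : H)‖) :=
                ⟨0, by rintro r ⟨w, rfl⟩; exact norm_nonneg _⟩
              exact ciInf_le hbdd ⟨x (m + 1), hx'⟩
          have hVI := (norm_eq_iInf_iff_real_inner_le_zero hK hx').1 hiInf u
            ⟨hFCS m hm1 u hu, ihF u hu⟩
          have hflip : (inner ℝ (x 1 - x (m + 1)) (x (m + 1) - u) : ℝ)
              = - (inner ℝ (x 1 - x (m + 1)) (u - x (m + 1)) : ℝ) := by
            rw [← inner_neg_right]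
            congr 1
            abel
          rw [hflip]
          linarith
  -- chosen point of F, distance bound
  obtain ⟨z₀, hz₀⟩ := hFne
  have hFK : ∀ n, 1 ≤ n → ∀ u ∈ F, u ∈ CS n ∩ QS n :=
    fun n hn u hu => ⟨hFCS n hn u hu, (hQSmain n hn).2 u hu⟩
  set D : ℝ := ‖z₀ - x 1‖ with hDdef
  have hD0 : 0 ≤ D := norm_nonneg _
  have hDle : ∀ n, 1 ≤ n → ‖x (n + 1) - x 1‖ ≤ D :=
    fun n hn => (hproj n hn).2 z₀ (hFK n hn z₀ hz₀)
  have hxbound : ∀ n, 1 ≤ n → ‖x n‖ ≤ ‖x 1‖ + D := by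
    intro n hn
    match n, hn with
    | 1, _ => linarith
    | (m + 2), _ =>
      have h1 := hDle (m + 1) (by omega)
      calc ‖x (m + 2)‖ = ‖(x (m + 2) - x 1) + x 1‖ := by rw [sub_add_cancel]
        _ ≤ ‖x (m + 2) - x 1‖ + ‖x 1‖ := norm_add_le _ _
        _ ≤ ‖x 1‖ + D := by linarith
  -- QS antitone
  have hQSstep : ∀ m, 1 ≤ m → QS (m + 1) ⊆ QS m := by
    intro m hm v hv; rw [hQS m hm] at hv; exact hv.1
  have hQSanti : ∀ n m, 1 ≤ n → n ≤ m → QS m ⊆ QS n := by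
    intro n m hn hnm
    induction m with
    | zero => omega
    | succ l ih =>
      rcases Nat.lt_or_ge n (l + 1) with h | h
      · exact (hQSstep l (by omega)).trans (ih (by omega))
      · have : n = l + 1 := by omega
        exact this ▸ subset_rfl
  have hxQS : ∀ m n, 1 ≤ n → n ≤ m → x (m + 1) ∈ QS (n + 1) := by
    intro m n hn hnm
    rcases Nat.eq_or_lt_of_le hnm with h | h
    · subst h
      rw [hQS n hn]
      refine ⟨(hproj n hn).1.2, ?_⟩
      simp
    · exact hQSanti (n + 1) m (by omega) h ((hproj m (by omega)).1.2)
  -- key inequality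
  have hkey : ∀ n, 1 ≤ n → ∀ v ∈ QS (n + 1),
      ‖x 1 - x (n + 1)‖ ^ 2 + ‖x (n + 1) - v‖ ^ 2 ≤ ‖x 1 - v‖ ^ 2 := by
    intro n hn v hv
    rw [hQS n hn] at hv
    have hid : ‖x 1 - v‖ ^ 2 = ‖x 1 - x (n + 1)‖ ^ 2
        + 2 * (inner ℝ (x 1 - x (n + 1)) (x (n + 1) - v) : ℝ) + ‖x (n + 1) - v‖ ^ 2 := by
      have hsplit : x 1 - v = (x 1 - x (n + 1)) + (x (n + 1) - v) := by abel
      rw [hsplit, norm_add_sq_real]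
    linarith [hv.2]
  have hxQSkey : ∀ n m, n ≤ m →
      ‖x 1 - x (n + 2)‖ ^ 2 + ‖x (n + 2) - x (m + 2)‖ ^ 2 ≤ ‖x 1 - x (m + 2)‖ ^ 2 := by
    intro n m hnm
    exact hkey (n + 1) (by omega) (x (m + 2)) (hxQS (m + 1) (n + 1) (by omega) (by omega))
  set b : ℕ → ℝ := fun n => ‖x 1 - x (n + 2)‖ ^ 2 with hbdef
  have hbmono : Monotone b := by
    intro n m hnm
    have := hxQSkey n m hnm
    have h2 := sq_nonneg ‖x (n + 2) - x (m + 2)‖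
    simp only [hbdef]
    linarith
  have hbbdd : BddAbove (Set.range b) := by
    refine ⟨D ^ 2, ?_⟩
    rintro r ⟨n, rfl⟩
    have h1 : ‖x 1 - x (n + 2)‖ ≤ D := by
      rw [norm_sub_rev]; exact hDle (n + 1) (by omega)
    exact pow_le_pow_left₀ (norm_nonneg _) h1 2
  have hbl : Tendsto b atTop (𝓝 (⨆ n, b n)) := tendsto_atTop_ciSup hbmono hbbdd
  have hbcauchy : CauchySeq b := hbl.cauchySeq
  -- x is Cauchy
  have hxcauchy : CauchySeq (fun n => x (n + 2)) := by
    rw [Metric.cauchySeq_iff]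
    intro ε hε
    obtain ⟨M, hM⟩ := Metric.cauchySeq_iff.1 hbcauchy (ε ^ 2) (by positivity)
    refine ⟨M, fun m hm n hn => ?_⟩
    have key : ∀ a c : ℕ, a ≤ c → M ≤ a → M ≤ c → dist (x (a + 2)) (x (c + 2)) < ε := by
      intro a c hac hMa hMc
      have h1 := hxQSkey a c hac
      have h2 := hM c hMc a hMa
      rw [Real.dist_eq] at h2
      have hba : b a ≤ b c := hbmono hac
      have habs : |b c - b a| = b c - b a := abs_of_nonneg (by linarith)
      rw [habs] at h2
      have hsq : ‖x (a + 2) - x (c + 2)‖ ^ 2 < ε ^ 2 := by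
        simp only [hbdef] at h1 h2 ⊢
        linarith
      rw [dist_eq_norm]
      nlinarith [norm_nonneg (x (a + 2) - x (c + 2))]
    rcases le_total m n with h | h
    · exact key m n h hm hn
    · rw [dist_comm]
      exact key n m h hn hm
  obtain ⟨q, hq⟩ := cauchySeq_tendsto_of_complete hxcauchy
  have hxq : Tendsto x atTop (𝓝 q) := (tendsto_add_atTop_iff_nat 2).1 hq
  have hxq1 : Tendsto (fun n => x (n + 1)) atTop (𝓝 q) := (tendsto_add_atTop_iff_nat 1).2 hxq
  have hqC : q ∈ C := by
    refine hCcl.mem_of_tendsto hxq ?_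
    filter_upwards [eventually_ge_atTop 1] with n hn using hxC n hn
  -- consecutive differences tend to zero
  have hdiffnorm : Tendsto (fun n => ‖x (n + 1) - x n‖) atTop (𝓝 0) := by
    have h := (hxq1.sub hxq).norm
    simpa using h
  -- ε_n → 0
  have hptop : Tendsto p atTop atTop := by
    rw [tendsto_atTop_atTop]
    intro c
    refine ⟨c * N + 1, fun n hn => ?_⟩
    have h1 : c * N ≤ n - 1 := by omega
    have h2 : c ≤ (n - 1) / N := (Nat.le_div_iff_mul_le hN).2 h1
    simp only [hpdef]
    omega
  have hklim' : Tendsto (fun n => k (p n)) atTop (𝓝 1) := hklim.comp hptop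
  set R : ℝ := ‖x 1‖ + D with hRdef
  have hεblim : Tendsto (fun n => (k (p n) - 1) * (ω + R) ^ 2) atTop (𝓝 0) := by
    have h := (hklim'.sub_const 1).mul_const ((ω + R) ^ 2)
    simpa using h
  have hεlim : Tendsto (fun n => (k (p n) - 1) * (ω + ‖x n‖) ^ 2) atTop (𝓝 0) := by
    apply squeeze_zero' (g := fun n => (k (p n) - 1) * (ω + R) ^ 2)
    · filter_upwards with n
      exact mul_nonneg (by linarith [hk (p n)]) (sq_nonneg _)
    · filter_upwards [eventually_ge_atTop 1] with n hn
      refine mul_le_mul_of_nonneg_left (pow_le_pow_left₀ (by positivity) ?_ 2)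
        (by linarith [hk (p n)])
      linarith [hxbound n hn]
    · exact hεblim
  -- ‖x (n+1) - y n‖ → 0
  have hCSineq : ∀ n, 1 ≤ n → ‖x (n + 1) - y n‖ ^ 2 ≤
      α n * ‖x (n + 1) - x 1‖ ^ 2 + (1 - α n) * ‖x (n + 1) - x n‖ ^ 2 +
        (k (p n) - 1) * (ω + ‖x n‖) ^ 2 := by
    intro n hn
    have h := (hproj n hn).1.1
    rw [hCS' n hn] at h
    exact h.2
  have hxylim : Tendsto (fun n => ‖x (n + 1) - y n‖) atTop (𝓝 0) := by
    apply aux_tendsto_of_sq (fun n => norm_nonneg _)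
    apply squeeze_zero' (g := fun n => α n * D ^ 2 + ‖x (n + 1) - x n‖ ^ 2 +
      (k (p n) - 1) * (ω + ‖x n‖) ^ 2)
    · filter_upwards with n using sq_nonneg _
    · filter_upwards [eventually_ge_atTop 1] with n hn
      have h := hCSineq n hn
      have hα0 := (hα n).1
      have hα1 := (hα n).2
      have h1 : ‖x (n + 1) - x 1‖ ^ 2 ≤ D ^ 2 :=
        pow_le_pow_left₀ (norm_nonneg _) (hDle n hn) 2
      nlinarith [sq_nonneg ‖x (n + 1) - x n‖, mul_le_mul_of_nonneg_left h1 hα0]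
    · have ht1 : Tendsto (fun n => α n * D ^ 2) atTop (𝓝 0) := by
        have := hαlim.mul_const (D ^ 2); simpa using this
      have ht2 : Tendsto (fun n => ‖x (n + 1) - x n‖ ^ 2) atTop (𝓝 0) := by
        have := hdiffnorm.pow 2; simpa using this
      have := (ht1.add ht2).add hεlim
      simpa using this
  have hxnylim : Tendsto (fun n => ‖x n - y n‖) atTop (𝓝 0) := by
    apply squeeze_zero' (g := fun n => ‖x (n + 1) - x n‖ + ‖x (n + 1) - y n‖)
    · filter_upwards with n using norm_nonneg _
    · filter_upwards with n
      calc ‖x n - y n‖ = ‖(x n - x (n + 1)) + (x (n + 1) - y n)‖ := by abel_nf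
        _ ≤ ‖x n - x (n + 1)‖ + ‖x (n + 1) - y n‖ := norm_add_le _ _
        _ = ‖x (n + 1) - x n‖ + ‖x (n + 1) - y n‖ := by rw [norm_sub_rev]
    · simpa using hdiffnorm.add hxylim
  -- σ n → 0
  have hσ : Tendsto (fun n => ‖(T (j n))^[p n] (x n) - x n‖) atTop (𝓝 0) := by
    apply squeeze_zero' (g := fun n => 2 * (‖x n - y n‖ + α n * (‖x 1‖ + R)))
    · filter_upwards with n using norm_nonneg _
    · have hhalf : ∀ᶠ n in atTop, α n < 1 / 2 :=
        hαlim.eventually_lt_const (by norm_num)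
      filter_upwards [eventually_ge_atTop 1, hhalf] with n hn hhn
      have hα0 := (hα n).1
      have hsm : (1 - α n) • ((T (j n))^[p n] (x n) - x n)
          = (y n - x n) - α n • (x 1 - x n) := by
        rw [hy' n hn]; module
      have hnorm1 : (1 - α n) * ‖(T (j n))^[p n] (x n) - x n‖
          ≤ ‖y n - x n‖ + α n * ‖x 1 - x n‖ := by
        have h1 : ‖(1 - α n) • ((T (j n))^[p n] (x n) - x n)‖
            = (1 - α n) * ‖(T (j n))^[p n] (x n) - x n‖ := by
          rw [norm_smul, Real.norm_eq_abs, abs_of_nonneg (by linarith)]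
        have h2 : ‖α n • (x 1 - x n)‖ = α n * ‖x 1 - x n‖ := by
          rw [norm_smul, Real.norm_eq_abs, abs_of_nonneg hα0]
        calc (1 - α n) * ‖(T (j n))^[p n] (x n) - x n‖
            = ‖(y n - x n) - α n • (x 1 - x n)‖ := by rw [← h1, hsm]
          _ ≤ ‖y n - x n‖ + ‖α n • (x 1 - x n)‖ := norm_sub_le _ _
          _ = ‖y n - x n‖ + α n * ‖x 1 - x n‖ := by rw [h2]
      have hx1n : ‖x 1 - x n‖ ≤ ‖x 1‖ + R := by
        calc ‖x 1 - x n‖ ≤ ‖x 1‖ + ‖x n‖ := norm_sub_le _ _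
          _ ≤ ‖x 1‖ + R := by linarith [hxbound n hn]
      have hyn : ‖y n - x n‖ = ‖x n - y n‖ := norm_sub_rev _ _
      have hprod : 0 ≤ ‖(T (j n))^[p n] (x n) - x n‖ * (1 - 2 * α n) :=
        mul_nonneg (norm_nonneg _) (by linarith)
      nlinarith [mul_le_mul_of_nonneg_left hx1n hα0]
    · have h1 : Tendsto (fun n => α n * (‖x 1‖ + R)) atTop (𝓝 0) := by
        have := hαlim.mul_const (‖x 1‖ + R); simpa using this
      have := ((hxnylim.add h1).const_mul 2)
      simpa using this
  -- q is a fixed point of every T i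
  have hTq : ∀ i, T i q = q := by
    intro i
    set s : ℕ → ℕ := fun m => m * N + (i : ℕ) + 1 with hsdef
    have hs1 : ∀ m, 1 ≤ s m := fun m => by simp only [hsdef]; omega
    have hjs : ∀ m, j (s m) = i := by
      intro m
      simp only [hjdef, hsdef]
      apply Fin.ext
      simp only []
      have : m * N + (i : ℕ) + 1 - 1 = (i : ℕ) + m * N := by omega
      rw [this, Nat.add_mul_mod_self_right, Nat.mod_eq_of_lt i.isLt]
    have hps : ∀ m, p (s m) = m + 1 := by
      intro m
      simp only [hpdef, hsdef]
      have h0 : m * N + (i : ℕ) + 1 - 1 = (i : ℕ) + m * N := by omega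
      rw [h0, Nat.add_mul_div_right _ _ hN, Nat.div_eq_of_lt i.isLt]
      omega
    have hstop : Tendsto s atTop atTop := by
      rw [tendsto_atTop_atTop]
      intro c
      refine ⟨c, fun n hn => ?_⟩
      have : n ≤ n * N := Nat.le_mul_of_pos_right n hN
      simp only [hsdef]
      omega
    have hxs : Tendsto (fun m => x (s m)) atTop (𝓝 q) := hxq.comp hstop
    have hσs : Tendsto (fun m => ‖(T i)^[m + 1] (x (s m)) - x (s m)‖) atTop (𝓝 0) := by
      have h := hσ.comp hstop
      have heq : (fun m => ‖(T (j (s m)))^[p (s m)] (x (s m)) - x (s m)‖)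
          = fun m => ‖(T i)^[m + 1] (x (s m)) - x (s m)‖ := by
        funext m; rw [hjs m, hps m]
      rw [show ((fun n => ‖(T (j n))^[p n] (x n) - x n‖) ∘ s)
          = (fun m => ‖(T (j (s m)))^[p (s m)] (x (s m)) - x (s m)‖) from rfl, heq] at h
      exact h
    have hdlim : Tendsto (fun m => ‖x (s (m + 1)) - x (s m)‖) atTop (𝓝 0) := by
      have := (((tendsto_add_atTop_iff_nat 1).2 hxs).sub hxs).norm
      simpa using this
    have hbound : ∀ m : ℕ, ‖x (s (m + 1)) - T i (x (s (m + 1)))‖ ≤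
        ‖(T i)^[m + 2] (x (s (m + 1))) - x (s (m + 1))‖ +
        L' * (L' * ‖x (s (m + 1)) - x (s m)‖ +
          ‖(T i)^[m + 1] (x (s m)) - x (s m)‖ + ‖x (s (m + 1)) - x (s m)‖) := by
      intro m
      set u := x (s (m + 1)) with hudef
      set u' := x (s m) with hu'def
      have huC : u ∈ C := hxC _ (hs1 (m + 1))
      have hu'C : u' ∈ C := hxC _ (hs1 m)
      have hiterC : (T i)^[m + 1] u ∈ C := (hTmaps i).iterate (m + 1) huC
      have step1 : ‖u - T i u‖ ≤ ‖u - (T i)^[m + 2] u‖ + ‖(T i)^[m + 2] u - T i u‖ :=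
        norm_sub_le_norm_sub_add_norm_sub _ _ _
      have step2 : ‖(T i)^[m + 2] u - T i u‖ ≤ L' * ‖(T i)^[m + 1] u - u‖ := by
        have hrw : (T i)^[m + 2] u = T i ((T i)^[m + 1] u) :=
          Function.iterate_succ_apply' (T i) (m + 1) u
        rw [hrw]
        exact hLip' i 1 le_rfl _ hiterC u huC
      have step3 : ‖(T i)^[m + 1] u - u‖ ≤
          L' * ‖u - u'‖ + ‖(T i)^[m + 1] u' - u'‖ + ‖u - u'‖ := by
        have t1 : ‖(T i)^[m + 1] u - u‖ ≤
            ‖(T i)^[m + 1] u - (T i)^[m + 1] u'‖ + ‖(T i)^[m + 1] u' - u'‖ + ‖u' - u‖ := by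
          have := norm_sub_le_norm_sub_add_norm_sub ((T i)^[m + 1] u) ((T i)^[m + 1] u') u
          calc ‖(T i)^[m + 1] u - u‖
              ≤ ‖(T i)^[m + 1] u - (T i)^[m + 1] u'‖ + ‖(T i)^[m + 1] u' - u‖ :=
                norm_sub_le_norm_sub_add_norm_sub _ _ _
            _ ≤ ‖(T i)^[m + 1] u - (T i)^[m + 1] u'‖ +
                (‖(T i)^[m + 1] u' - u'‖ + ‖u' - u‖) := by
                linarith [norm_sub_le_norm_sub_add_norm_sub ((T i)^[m + 1] u') u' u]
            _ = _ := by ring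
        have t2 : ‖(T i)^[m + 1] u - (T i)^[m + 1] u'‖ ≤ L' * ‖u - u'‖ :=
          hLip' i (m + 1) (by omega) u huC u' hu'C
        have t3 : ‖u' - u‖ = ‖u - u'‖ := norm_sub_rev _ _
        linarith
      have hσ1 : ‖u - (T i)^[m + 2] u‖ = ‖(T i)^[m + 2] u - u‖ := norm_sub_rev _ _
      have := mul_le_mul_of_nonneg_left step3 hL'0
      linarith
    have hglim : Tendsto (fun m => ‖x (s m) - T i (x (s m))‖) atTop (𝓝 0) := by
      rw [← tendsto_add_atTop_iff_nat 1]
      apply squeeze_zero' (g := fun m =>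
        ‖(T i)^[m + 2] (x (s (m + 1))) - x (s (m + 1))‖ +
        L' * (L' * ‖x (s (m + 1)) - x (s m)‖ +
          ‖(T i)^[m + 1] (x (s m)) - x (s m)‖ + ‖x (s (m + 1)) - x (s m)‖))
      · filter_upwards with m using norm_nonneg _
      · filter_upwards with m using hbound m
      · have hσs1 : Tendsto
            (fun m => ‖(T i)^[m + 2] (x (s (m + 1))) - x (s (m + 1))‖) atTop (𝓝 0) :=
          (tendsto_add_atTop_iff_nat 1).2 hσs
        have hcomb := hσs1.add
          ((((hdlim.const_mul L').add hσs).add hdlim).const_mul L')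
        simpa using hcomb
    have hTxs : Tendsto (fun m => T i (x (s m))) atTop (𝓝 (T i q)) := by
      rw [tendsto_iff_norm_sub_tendsto_zero]
      apply squeeze_zero' (g := fun m => L' * ‖x (s m) - q‖)
      · filter_upwards with m using norm_nonneg _
      · filter_upwards with m
        have h1 : T i (x (s m)) = (T i)^[1] (x (s m)) := rfl
        have h2 : T i q = (T i)^[1] q := rfl
        rw [h1, h2]
        exact hLip' i 1 le_rfl _ (hxC _ (hs1 m)) q hqC
      · have h := (hxs.sub (tendsto_const_nhds (x := q))).norm
        have h2 := h.const_mul L'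
        simpa using h2
    have hzero : Tendsto (fun m => x (s m) - T i (x (s m))) atTop (𝓝 0) := by
      rw [tendsto_zero_iff_norm_tendsto_zero]
      exact hglim
    have := tendsto_nhds_unique (hxs.sub hTxs) hzero
    have : q - T i q = 0 := this
    have := sub_eq_zero.1 this
    exact this.symm
  have hqF : q ∈ F := by
    rw [hF]
    exact Set.mem_iInter.2 fun i => ⟨hqC, hTq i⟩
  -- conclusion
  refine ⟨q, hqF, ?_, hxq⟩
  intro v hv
  have hlim : Tendsto (fun n => ‖x (n + 1) - x 1‖) atTop (𝓝 ‖q - x 1‖) :=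
    (hxq1.sub (tendsto_const_nhds (x := x 1))).norm
  refine le_of_tendsto hlim ?_
  filter_upwards [eventually_ge_atTop 1] with n hn
  exact (hproj n hn).2 v (hFK n hn v hv)
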